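/- Let γ₁, γ₂ > 0 and let w₁ > w₂ ≥ 0 be two water levels with max(log₂(w₁·γ₁), 0) + max(log₂(w₂·γ₂), 0) > 0. Then there exists a common water level w with w₂ ≤ w ≤ w₁ such that max(log₂(w·γ₁), 0) + max(log₂(w·γ₂), 0) = max(log₂(w₁·γ₁), 0) + max(log₂(w₂·γ₂), 0) (the total throughput is preserved) and max(w − 1/γ₁, 0) + max(w − 1/γ₂, 0) ≤ max(w₁ − 1/γ₁, 0) + max(w₂ − 1/γ₂, 0) (the total consumed energy does not increase). -/

import Mathlib

lemma aux_logb (γ w : ℝ) (hγ : 0 < γ) (hw : 0 ≤ w) :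
    max (Real.logb 2 (w * γ)) 0 = Real.logb 2 (γ * max w (1/γ)) := by
  rcases le_or_gt (1/γ) w with h | h
  · rw [max_eq_left h, max_eq_left, mul_comm]
    exact Real.logb_nonneg one_lt_two ((div_le_iff₀ hγ).mp h)
  · rw [max_eq_right h.le, mul_one_div_cancel hγ.ne', Real.logb_one, max_eq_right]
    exact Real.logb_nonpos one_lt_two (by positivity) ((lt_div_iff₀ hγ).mp h).le

lemma aux_energy (γ w : ℝ) : max (w - 1/γ) 0 = max w (1/γ) - 1/γ := by
  rcases le_total w (1/γ) with h | h
  · rw [max_eq_right (by linarith), max_eq_right h, sub_self]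
  · rw [max_eq_left (by linarith), max_eq_left h]

lemma aux_cont (γ : ℝ) (hγ : 0 < γ) :
    Continuous fun w : ℝ => Real.logb 2 (γ * max w (1/γ)) := by
  have hinner : Continuous fun w : ℝ => γ * max w (1/γ) :=
    continuous_const.mul (continuous_id.max continuous_const)
  have := Real.continuousOn_log.comp_continuous hinner (fun w => by
    have : 0 < γ * max w (1/γ) := by positivity
    simpa using this.ne')
  simpa [Real.logb, Function.comp] using this.div_const _

lemma aux_sum (x₁ x₂ y₁ y₂ : ℝ) (hx₁ : 0 < x₁) (hx₂ : 0 < x₂)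
    (hprod : x₁ * x₂ = y₁ * y₂) (h1 : x₁ ≤ y₁) (h2 : y₂ ≤ x₂) (h3 : y₂ < x₂ → y₂ ≤ x₁) :
    x₁ + x₂ ≤ y₁ + y₂ := by
  rcases eq_or_lt_of_le h2 with heq | hlt
  · have : x₁ = y₁ := by
      apply mul_right_cancel₀ hx₂.ne'
      rw [hprod, heq]
    linarith
  · have h4 := h3 hlt
    nlinarith [mul_nonneg (sub_nonneg.mpr h4) (sub_nonneg.mpr h1)]

theorem stmt_2 (γ₁ γ₂ w₁ w₂ : ℝ) (hγ₁ : 0 < γ₁) (hγ₂ : 0 < γ₂)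
    (hw₂ : 0 ≤ w₂) (hlt : w₂ < w₁)
    (hpos : 0 < max (Real.logb 2 (w₁ * γ₁)) 0 + max (Real.logb 2 (w₂ * γ₂)) 0) :
    ∃ w : ℝ, w₂ ≤ w ∧ w ≤ w₁ ∧
      max (Real.logb 2 (w * γ₁)) 0 + max (Real.logb 2 (w * γ₂)) 0 =
        max (Real.logb 2 (w₁ * γ₁)) 0 + max (Real.logb 2 (w₂ * γ₂)) 0 ∧
      max (w - 1 / γ₁) 0 + max (w - 1 / γ₂) 0 ≤
        max (w₁ - 1 / γ₁) 0 + max (w₂ - 1 / γ₂) 0 := by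
  have hw₁ : (0:ℝ) ≤ w₁ := hw₂.trans hlt.le
  set F : ℝ → ℝ := fun w => Real.logb 2 (γ₁ * max w (1/γ₁)) + Real.logb 2 (γ₂ * max w (1/γ₂)) with hF
  have hFc : Continuous F := (aux_cont γ₁ hγ₁).add (aux_cont γ₂ hγ₂)
  set T : ℝ := Real.logb 2 (γ₁ * max w₁ (1/γ₁)) + Real.logb 2 (γ₂ * max w₂ (1/γ₂)) with hT
  have hmono : ∀ γ a b : ℝ, 0 < γ → a ≤ b →
      Real.logb 2 (γ * max a (1/γ)) ≤ Real.logb 2 (γ * max b (1/γ)) := by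
    intro γ a b hγ hab
    apply Real.logb_le_logb_of_le one_lt_two (by positivity)
    have := max_le_max_right (1/γ) hab
    nlinarith
  have hTmem : T ∈ Set.Icc (F w₂) (F w₁) := by
    constructor
    · exact add_le_add_left (hmono γ₁ w₂ w₁ hγ₁ hlt.le) _
    · exact add_le_add_right (hmono γ₂ w₂ w₁ hγ₂ hlt.le) _
  obtain ⟨w, hwmem, hFw⟩ := intermediate_value_Icc hlt.le hFc.continuousOn hTmem
  obtain ⟨hw2w, hww1⟩ := hwmem
  have hw0 : (0:ℝ) ≤ w := hw₂.trans hw2w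
  refine ⟨w, hw2w, hww1, ?_, ?_⟩
  · rw [aux_logb γ₁ w hγ₁ hw0, aux_logb γ₂ w hγ₂ hw0,
      aux_logb γ₁ w₁ hγ₁ hw₁, aux_logb γ₂ w₂ hγ₂ hw₂]
    exact hFw
  · -- energy
    set x₁ := max w (1/γ₁) with hx₁def
    set x₂ := max w (1/γ₂) with hx₂def
    set y₁ := max w₁ (1/γ₁) with hy₁def
    set y₂ := max w₂ (1/γ₂) with hy₂def
    have hx₁p : 0 < x₁ := lt_of_lt_of_le (by positivity) (le_max_right _ _)
    have hx₂p : 0 < x₂ := lt_of_lt_of_le (by positivity) (le_max_right _ _)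
    have hy₁p : 0 < y₁ := lt_of_lt_of_le (by positivity) (le_max_right _ _)
    have hy₂p : 0 < y₂ := lt_of_lt_of_le (by positivity) (le_max_right _ _)
    -- product equality from hFw
    have hprodγ : (γ₁ * x₁) * (γ₂ * x₂) = (γ₁ * y₁) * (γ₂ * y₂) := by
      have h1 : Real.logb 2 ((γ₁ * x₁) * (γ₂ * x₂)) = Real.logb 2 ((γ₁ * y₁) * (γ₂ * y₂)) := by
        rw [Real.logb_mul (x := γ₁ * x₁) (by positivity) (by positivity),
            Real.logb_mul (x := γ₁ * y₁) (by positivity) (by positivity)]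
        exact hFw
      have e1 : (2:ℝ) ^ Real.logb 2 ((γ₁ * x₁) * (γ₂ * x₂)) = (γ₁ * x₁) * (γ₂ * x₂) :=
        Real.rpow_logb (by norm_num) (by norm_num) (by positivity)
      have e2 : (2:ℝ) ^ Real.logb 2 ((γ₁ * y₁) * (γ₂ * y₂)) = (γ₁ * y₁) * (γ₂ * y₂) :=
        Real.rpow_logb (by norm_num) (by norm_num) (by positivity)
      rw [← e1, ← e2, h1]
    have hprod : x₁ * x₂ = y₁ * y₂ := by
      have hγγ : (0:ℝ) < γ₁ * γ₂ := by positivity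
      apply mul_left_cancel₀ hγγ.ne'
      nlinarith [hprodγ]
    have h1 : x₁ ≤ y₁ := max_le_max_right _ hww1
    have h2 : y₂ ≤ x₂ := max_le_max_right _ hw2w
    have h3 : y₂ < x₂ → y₂ ≤ x₁ := by
      intro hlt2
      have hwx₂ : x₂ = w := by
        rcases max_cases w (1/γ₂) with ⟨h, _⟩ | ⟨h, hle⟩
        · exact h
        · exfalso
          have : y₂ ≥ 1/γ₂ := le_max_right _ _
          rw [hx₂def] at hlt2
          simp only [max_eq_right hle.le] at *
          linarith [hlt2.trans_le (le_refl (1/γ₂))]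
      have : y₂ < w := hwx₂ ▸ hlt2
      exact this.le.trans (le_max_left _ _)
    have := aux_sum x₁ x₂ y₁ y₂ hx₁p hx₂p hprod h1 h2 h3
    rw [aux_energy γ₁ w, aux_energy γ₂ w, aux_energy γ₁ w₁, aux_energy γ₂ w₂]
    linarith
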